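/- Let f(t) = Σ_{i≥1} cᵢ tⁱ ∈ tℂ[[t]] be an algebraic power series (i.e., F(t, f(t)) = 0 for some nonzero F ∈ ℂ[x,y]). Then for all sufficiently large N, the shifted power series Σ_{i≥N} c_{i+N} tⁱ is nonsingular algebraic: it satisfies G(t, g(t)) = 0 for some G ∈ ℂ[x,y] with ∂G/∂y(0, g(0)) ≠ 0. -/

import Mathlib

open Polynomial PowerSeries

noncomputable section SD

/-- polynomials → power series as ℂ-algebra hom -/
def αA : Polynomial ℂ →ₐ[ℂ] PowerSeries ℂ := Polynomial.aeval PowerSeries.X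

lemma αA_apply (p : Polynomial ℂ) : αA p = (p : PowerSeries ℂ) := by
  rw [αA, Polynomial.aeval_def, ← Polynomial.eval₂_C_X_eq_coe]
  congr 1

lemma coeff_αA (p : Polynomial ℂ) (n : ℕ) :
    PowerSeries.coeff n (αA p) = p.coeff n := by
  rw [αA_apply, Polynomial.coeff_coe]

lemma αA_injective : Function.Injective αA := by
  intro p q h
  rw [αA_apply, αA_apply] at h
  exact_mod_cast h

/-- x-variable embedding ℂ[x] → ℂ[x,y] -/
def ψx : Polynomial ℂ →ₐ[ℂ] MvPolynomial (Fin 2) ℂ := Polynomial.aeval (MvPolynomial.X 0)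

/-- ℂ[x][y] → ℂ[x,y] -/
def ψ (Q : Polynomial (Polynomial ℂ)) : MvPolynomial (Fin 2) ℂ :=
  Polynomial.eval₂ ψx.toRingHom (MvPolynomial.X 1) Q

lemma aeval_ψ (s : PowerSeries ℂ) (Q : Polynomial (Polynomial ℂ)) :
    MvPolynomial.aeval ![PowerSeries.X, s] (ψ Q) = Polynomial.eval₂ (αA : Polynomial ℂ →+* PowerSeries ℂ) s Q := by
  rw [ψ]
  rw [show MvPolynomial.aeval ![PowerSeries.X, s] (Polynomial.eval₂ ψx.toRingHom (MvPolynomial.X 1) Q)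
      = (MvPolynomial.aeval ![PowerSeries.X, s]).toRingHom (Polynomial.eval₂ ψx.toRingHom (MvPolynomial.X 1) Q) from rfl,
    Polynomial.hom_eval₂]
  congr 1
  · apply RingHom.ext
    intro p
    induction p using Polynomial.induction_on with
    | C a => simp [ψx, αA, PowerSeries.algebraMap_apply]
    | add p q hp hq => simp_all [map_add]
    | monomial n a ih =>
        simp only [map_mul, pow_succ, ← mul_assoc] at *
        rw [ih]
        simp [ψx, αA]
  · simp

lemma pderiv1_ψx (p : Polynomial ℂ) : MvPolynomial.pderiv 1 (ψx p) = 0 := by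
  induction p using Polynomial.induction_on with
  | C a => simp [ψx]
  | add p q hp hq => simp_all
  | monomial n a ih =>
      rw [show ((n:ℕ)+1) = n + 1 from rfl] at *
      simp only [map_mul, pow_succ, ← mul_assoc, map_mul] at *
      rw [Derivation.leibniz]
      simp [ih, ψx]

lemma eval00_ψx (p : Polynomial ℂ) :
    MvPolynomial.eval ![(0:ℂ), 0] (ψx p) = p.coeff 0 := by
  induction p using Polynomial.induction_on with
  | C a => simp [ψx]
  | add p q hp hq => simp_all [Polynomial.coeff_add]
  | monomial n a ih =>
      simp only [map_mul, pow_succ, ← mul_assoc, map_mul] at *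
      simp [ψx]

lemma eval_pderiv_ψ (Q : Polynomial (Polynomial ℂ)) :
    MvPolynomial.eval ![(0:ℂ), 0] (MvPolynomial.pderiv 1 (ψ Q)) = (Q.coeff 1).coeff 0 := by
  induction Q using Polynomial.induction_on' with
  | add p q hp hq => simp_all [ψ, Polynomial.eval₂_add]
  | monomial n a =>
      rw [ψ, Polynomial.eval₂_monomial, Derivation.leibniz, Derivation.leibniz_pow]
      rcases n with _ | n
      · simp [pderiv1_ψx]
      · rcases n with _ | n
        · simpa [pderiv1_ψx] using eval00_ψx a
        · simp [pderiv1_ψx, Polynomial.coeff_monomial]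

def ψA : Polynomial (Polynomial ℂ) →ₐ[ℂ] MvPolynomial (Fin 2) ℂ :=
  Polynomial.aevalTower ψx (MvPolynomial.X 1)

lemma ψA_eq (Q : Polynomial (Polynomial ℂ)) : ψA Q = ψ Q := rfl

def e2 : MvPolynomial (Fin 2) ℂ ≃ₐ[ℂ] Polynomial (Polynomial ℂ) :=
  (MvPolynomial.renameEquiv ℂ (Equiv.swap 0 1)).trans
    ((MvPolynomial.finSuccEquiv ℂ 1).trans
      (Polynomial.mapAlgEquiv ((MvPolynomial.renameEquiv ℂ (Equiv.equivPUnit.{1,1} (Fin 1))).trans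
        (MvPolynomial.pUnitAlgEquiv ℂ))))

lemma e2_X0 : e2 (MvPolynomial.X 0) = Polynomial.C Polynomial.X := by
  rw [e2, AlgEquiv.trans_apply, AlgEquiv.trans_apply, MvPolynomial.renameEquiv_apply,
    MvPolynomial.rename_X, Equiv.swap_apply_left,
    show ((1:Fin 2)) = Fin.succ 0 from rfl, MvPolynomial.finSuccEquiv_X_succ]
  simp [Polynomial.mapAlgEquiv, MvPolynomial.pUnitAlgEquiv]

lemma e2_X1 : e2 (MvPolynomial.X 1) = Polynomial.X := by
  rw [e2, AlgEquiv.trans_apply, AlgEquiv.trans_apply, MvPolynomial.renameEquiv_apply,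
    MvPolynomial.rename_X, Equiv.swap_apply_right, MvPolynomial.finSuccEquiv_X_zero]
  simp [Polynomial.mapAlgEquiv, MvPolynomial.pUnitAlgEquiv]

lemma ψ_e2 (F : MvPolynomial (Fin 2) ℂ) : ψ (e2 F) = F := by
  rw [← ψA_eq]
  have h : (ψA.comp (e2 : MvPolynomial (Fin 2) ℂ →ₐ[ℂ] Polynomial (Polynomial ℂ))) =
      AlgHom.id ℂ (MvPolynomial (Fin 2) ℂ) := by
    apply MvPolynomial.algHom_ext
    intro i
    fin_cases i
    · show ψA (e2 (MvPolynomial.X 0)) = MvPolynomial.X 0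
      rw [e2_X0, ψA, Polynomial.aevalTower_C]
      simp [ψx]
    · show ψA (e2 (MvPolynomial.X 1)) = MvPolynomial.X 1
      rw [e2_X1, ψA, Polynomial.aevalTower_X]
  calc ψA (e2 F) = (ψA.comp (e2 : MvPolynomial (Fin 2) ℂ →ₐ[ℂ] Polynomial (Polynomial ℂ))) F := rfl
  _ = F := by rw [h]; rfl

lemma coeff_comp_C_mul_X (Q : Polynomial (Polynomial ℂ)) (z : Polynomial ℂ) (k : ℕ) :
    (Q.comp (Polynomial.C z * Polynomial.X)).coeff k = Q.coeff k * z ^ k := by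
  induction Q using Polynomial.induction_on' with
  | add p q hp hq => simp_all [Polynomial.add_comp, Polynomial.coeff_add, add_mul]
  | monomial n a =>
      rw [Polynomial.monomial_comp, mul_pow, ← Polynomial.C_pow, ← mul_assoc, ← Polynomial.C_mul,
        Polynomial.coeff_C_mul, Polynomial.coeff_X_pow, Polynomial.coeff_monomial]
      split_ifs with h1 h2 <;> simp_all

lemma eval₂_congr_mod (s t : PowerSeries ℂ) (m : ℕ)
    (h : (PowerSeries.X : PowerSeries ℂ) ^ m ∣ s - t) (Q : Polynomial (Polynomial ℂ)) :
    (PowerSeries.X : PowerSeries ℂ) ^ m ∣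
      Polynomial.eval₂ (αA : Polynomial ℂ →+* PowerSeries ℂ) s Q -
      Polynomial.eval₂ (αA : Polynomial ℂ →+* PowerSeries ℂ) t Q := by
  have hd := Polynomial.sub_dvd_eval_sub s t (Q.map (αA : Polynomial ℂ →+* PowerSeries ℂ))
  rw [Polynomial.eval_map, Polynomial.eval_map] at hd
  exact dvd_trans h hd


end SD

/-- if `f(t) = Σ_{i≥1} cᵢ tⁱ` is an algebraic power series, then for all
sufficiently large `N` the shifted series `Σ_{i≥N} c_{i+N} tⁱ` is *nonsingular*
algebraic: it satisfies `G(t, g(t)) = 0` for some nonzero `G ∈ ℂ[x,y]` with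
`∂G/∂y(0, g(0)) ≠ 0`. -/
theorem shift_desingularization (c : ℕ → ℂ) (hc0 : c 0 = 0)
    (halg : ∃ F : MvPolynomial (Fin 2) ℂ, F ≠ 0 ∧
      MvPolynomial.aeval ![PowerSeries.X, PowerSeries.mk c] F = 0) :
    ∃ N₀ : ℕ, ∀ N ≥ N₀,
      ∃ G : MvPolynomial (Fin 2) ℂ, G ≠ 0 ∧
        MvPolynomial.aeval
          ![PowerSeries.X, PowerSeries.mk (fun i => if N ≤ i then c (i + N) else 0)] G = 0 ∧
        MvPolynomial.eval
          ![0, PowerSeries.constantCoeff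
              (PowerSeries.mk (fun i => if N ≤ i then c (i + N) else 0))]
          (MvPolynomial.pderiv 1 G) ≠ 0 := by
  classical
  obtain ⟨F, hF0, hFf⟩ := halg
  set f : PowerSeries ℂ := PowerSeries.mk c with hfdef
  -- transfer to one-variable polynomials over ℂ[x]
  have hQex : ∃ n : ℕ, ∃ Q : Polynomial (Polynomial ℂ), Q ≠ 0 ∧
      Polynomial.eval₂ (αA : Polynomial ℂ →+* PowerSeries ℂ) f Q = 0 ∧ Q.natDegree = n := by
    refine ⟨(e2 F).natDegree, e2 F, ?_, ?_, rfl⟩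
    · intro h
      exact hF0 (by simpa using congrArg e2.symm h)
    · rw [← aeval_ψ, ψ_e2]; exact hFf
  obtain ⟨Q, hQ0, hQf, hQd⟩ := Nat.find_spec hQex
  -- minimal degree is ≥ 1
  have hd1 : 1 ≤ Q.natDegree := by
    rcases Nat.eq_zero_or_pos Q.natDegree with h | h
    · exfalso
      have hC := Polynomial.eq_C_of_natDegree_eq_zero h
      rw [hC, Polynomial.eval₂_C] at hQf
      have : Q.coeff 0 = 0 := by
        apply αA_injective
        rw [map_zero]; exact hQf
      exact hQ0 (by rw [hC, this, map_zero])
    · exact h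
  have hQ'0 : Q.derivative ≠ 0 := by
    intro h
    have := Polynomial.natDegree_eq_zero_of_derivative_eq_zero h
    omega
  set w : PowerSeries ℂ :=
    Polynomial.eval₂ (αA : Polynomial ℂ →+* PowerSeries ℂ) f Q.derivative with hwdef
  have hw : w ≠ 0 := by
    intro h
    have hlt : Q.derivative.natDegree < Nat.find hQex := by
      rw [← hQd]
      exact Polynomial.natDegree_derivative_lt (by omega)
    exact Nat.find_min hQex hlt ⟨Q.derivative, hQ'0, h, rfl⟩
  have hv : ∃ n, PowerSeries.coeff n w ≠ 0 := by
    by_contra h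
    push_neg at h
    exact hw (PowerSeries.ext fun n => by rw [h n, map_zero])
  set v : ℕ := Nat.find hv with hvdef
  have hvne : PowerSeries.coeff v w ≠ 0 := Nat.find_spec hv
  have hvmin : ∀ i < v, PowerSeries.coeff i w = 0 := by
    intro i hi
    by_contra h
    exact Nat.find_min hv hi h
  refine ⟨v + 1, fun N hN => ?_⟩
  have hN1 : 1 ≤ N := by omega
  have hvN : v < N := by omega
  set g : PowerSeries ℂ := PowerSeries.mk (fun i => if N ≤ i then c (i + N) else 0) with hgdef
  have hg0 : PowerSeries.constantCoeff g = 0 := by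
    rw [hgdef, ← PowerSeries.coeff_zero_eq_constantCoeff_apply, PowerSeries.coeff_mk,
      if_neg (by omega)]
  have hgN : ∀ i < N, PowerSeries.coeff i g = 0 := by
    intro i hi
    rw [hgdef, PowerSeries.coeff_mk, if_neg (by omega)]
  set p : Polynomial ℂ := ∑ j ∈ Finset.range (2*N), Polynomial.C (c j) * Polynomial.X ^ j
    with hpdef
  have hpc : ∀ k, p.coeff k = if k < 2*N then c k else 0 := by
    intro k
    rw [hpdef, Polynomial.finset_sum_coeff]
    simp_rw [Polynomial.coeff_C_mul, Polynomial.coeff_X_pow, mul_ite, mul_one, mul_zero]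
    rw [Finset.sum_ite_eq (Finset.range (2*N)) k c]
    simp [Finset.mem_range]
  have hsplit : f = αA p + (PowerSeries.X : PowerSeries ℂ) ^ N * g := by
    ext k
    rw [map_add, coeff_αA, hpc, PowerSeries.coeff_X_pow_mul', hfdef, PowerSeries.coeff_mk]
    by_cases h1 : N ≤ k
    · by_cases h2 : k < 2*N
      · rw [if_pos h2, if_pos h1, hgdef, PowerSeries.coeff_mk, if_neg (by omega), add_zero]
      · rw [if_neg h2, if_pos h1, hgdef, PowerSeries.coeff_mk, if_pos (by omega), zero_add,
          Nat.sub_add_cancel (by omega)]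
    · rw [if_pos (by omega), if_neg h1, add_zero]
  have hdiff : (PowerSeries.X : PowerSeries ℂ) ^ (2*N) ∣ f - αA p := by
    rw [hsplit, add_sub_cancel_left, two_mul, pow_add]
    exact mul_dvd_mul_left _ (PowerSeries.X_pow_dvd_iff.mpr hgN)
  have hcongr : ∀ Qq : Polynomial (Polynomial ℂ), ∀ i < 2*N,
      PowerSeries.coeff i (Polynomial.eval₂ (αA : Polynomial ℂ →+* PowerSeries ℂ) (αA p) Qq)
        = PowerSeries.coeff i (Polynomial.eval₂ (αA : Polynomial ℂ →+* PowerSeries ℂ) f Qq) := by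
    intro Qq i hi
    have hd := eval₂_congr_mod f (αA p) (2*N) hdiff Qq
    have h2 := (PowerSeries.X_pow_dvd_iff.mp hd) i hi
    rw [map_sub, sub_eq_zero] at h2
    exact h2.symm
  have h0 : ∀ i < 2*N, (Q.eval p).coeff i = 0 := by
    intro i hi
    have : αA (Q.eval p) = Polynomial.eval₂ (αA : Polynomial ℂ →+* PowerSeries ℂ) (αA p) Q :=
      (Polynomial.eval₂_hom _ _).symm
    have h2 := hcongr Q i hi
    rw [← this, hQf, map_zero, coeff_αA] at h2
    exact h2
  have h1a : ∀ i < v, (Q.derivative.eval p).coeff i = 0 := by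
    intro i hi
    have : αA (Q.derivative.eval p)
        = Polynomial.eval₂ (αA : Polynomial ℂ →+* PowerSeries ℂ) (αA p) Q.derivative :=
      (Polynomial.eval₂_hom _ _).symm
    have h2 := hcongr Q.derivative i (by omega)
    rw [← this, ← hwdef, coeff_αA] at h2
    rw [h2]; exact hvmin i hi
  have h1b : (Q.derivative.eval p).coeff v ≠ 0 := by
    have : αA (Q.derivative.eval p)
        = Polynomial.eval₂ (αA : Polynomial ℂ →+* PowerSeries ℂ) (αA p) Q.derivative :=
      (Polynomial.eval₂_hom _ _).symm
    have h2 := hcongr Q.derivative v (by omega)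
    rw [← this, ← hwdef, coeff_αA] at h2
    rw [h2]; exact hvne
  set H : Polynomial (Polynomial ℂ) :=
    Q.comp (Polynomial.C p + Polynomial.C (Polynomial.X ^ N) * Polynomial.X) with hHdef
  have hHg : Polynomial.eval₂ (αA : Polynomial ℂ →+* PowerSeries ℂ) g H = 0 := by
    rw [hHdef, Polynomial.eval₂_comp, Polynomial.eval₂_add, Polynomial.eval₂_mul,
      Polynomial.eval₂_C, Polynomial.eval₂_C, Polynomial.eval₂_X]
    have hXN : αA (Polynomial.X ^ N) = (PowerSeries.X : PowerSeries ℂ) ^ N := by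
      rw [map_pow]; congr 1; exact Polynomial.aeval_X _
    simp only [AlgHom.coe_toRingHom] at *
    rw [hXN, ← hsplit]
    exact hQf
  have hHcoeff : ∀ k, H.coeff k = (Polynomial.taylor p Q).coeff k * (Polynomial.X ^ N) ^ k := by
    intro k
    have hH2 : H = (Polynomial.taylor p Q).comp (Polynomial.C (Polynomial.X ^ N) * Polynomial.X)
        := by
      rw [Polynomial.taylor_apply, Polynomial.comp_assoc, hHdef]
      congr 1
      rw [Polynomial.add_comp, Polynomial.X_comp, Polynomial.C_comp, add_comm]
    rw [hH2, coeff_comp_C_mul_X]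
  have hdvd : Polynomial.C (Polynomial.X ^ (N + v)) ∣ H := by
    rw [Polynomial.C_dvd_iff_dvd_coeff]
    intro k
    rw [hHcoeff]
    match k with
    | 0 =>
      rw [Polynomial.taylor_coeff_zero, pow_zero, mul_one]
      exact Polynomial.X_pow_dvd_iff.mpr (fun i hi => h0 i (by omega))
    | 1 =>
      rw [Polynomial.taylor_coeff_one, pow_one]
      have hx1 : (Polynomial.X : Polynomial ℂ) ^ v ∣ Q.derivative.eval p :=
        Polynomial.X_pow_dvd_iff.mpr h1a
      have hx2 : (Polynomial.X : Polynomial ℂ) ^ (N + v)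
          = Polynomial.X ^ v * Polynomial.X ^ N := by
        rw [← pow_add, Nat.add_comm]
      rw [hx2]
      exact mul_dvd_mul hx1 dvd_rfl
    | (k+2) =>
      apply Dvd.dvd.mul_left
      rw [← pow_mul]
      apply pow_dvd_pow
      have : N * 2 ≤ N * (k + 2) := Nat.mul_le_mul_left N (by omega)
      omega
  obtain ⟨G, hGdef⟩ := hdvd
  have hGg : Polynomial.eval₂ (αA : Polynomial ℂ →+* PowerSeries ℂ) g G = 0 := by
    have h2 := hHg
    rw [hGdef, Polynomial.eval₂_mul, Polynomial.eval₂_C] at h2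
    have hX : αA (Polynomial.X ^ (N+v)) ≠ 0 := by
      rw [map_pow]
      rw [show αA Polynomial.X = PowerSeries.X from Polynomial.aeval_X _]
      exact pow_ne_zero _ PowerSeries.X_ne_zero
    exact (mul_eq_zero.mp h2).resolve_left hX
  have hG1 : (G.coeff 1).coeff 0 ≠ 0 := by
    have e1 : H.coeff 1 = Polynomial.X ^ (N+v) * G.coeff 1 := by
      rw [hGdef, Polynomial.coeff_C_mul]
    have e2' : (H.coeff 1).coeff (N+v) = (G.coeff 1).coeff 0 := by
      rw [e1]
      have := Polynomial.coeff_X_pow_mul (G.coeff 1) (N+v) 0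
      simpa using this
    have e3 : (H.coeff 1).coeff (N+v) = (Q.derivative.eval p).coeff v := by
      rw [hHcoeff 1, pow_one, Polynomial.taylor_coeff_one,
        show N + v = v + N from Nat.add_comm _ _]
      exact Polynomial.coeff_mul_X_pow _ N v
    rw [← e2', e3]
    exact h1b
  refine ⟨ψ G, ?_, ?_, ?_⟩
  · intro h
    apply hG1
    have h2 := eval_pderiv_ψ G
    rw [h, map_zero, map_zero] at h2
    exact h2.symm
  · rw [aeval_ψ]; exact hGg
  · rw [hg0, eval_pderiv_ψ]
    exact hG1
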